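/- arXiv:2112.02854 — 2 statements merged into one kernel-verified Lean document; each statement's English description precedes it below -/
import Mathlib

section
/- Let d ≥ 2 and let 𝐯 be a sequence over an alphabet of d letters in which every factor of length d−1 has pairwise distinct letters. Suppose 𝐯 contains a factor of the form abXab, where a and b are distinct letters and X is a (possibly empty) finite word containing neither a nor b. Then |X| ≤ d−2 and the critical exponent of 𝐯 satisfies E(𝐯) ≥ (d+2)/d. -/
open Filter
open scoped ENNReal

namespace BalancedCE

variable {α : Type*} {β : Type*}

/-- The factor of `v` of length `n` starting at position `i`. -/
def factorAt (v : ℕ → α) (i n : ℕ) : List α := (List.range n).map fun k => v (i + k)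

/-- `u` is a factor of the sequence `v`. -/
def IsFactor (v : ℕ → α) (u : List α) : Prop := ∃ i, factorAt v i u.length = u

/-- The word `w` occurs in the sequence `v` at position `i`. -/
def OccursAt (v : ℕ → α) (w : List α) (i : ℕ) : Prop := factorAt v i w.length = w

/-- A sequence is balanced if counts of each letter in equal-length factors differ by at most 1. -/
def Balanced [DecidableEq α] (v : ℕ → α) : Prop :=
  ∀ (a : α) (u w : List α), IsFactor v u → IsFactor v w → u.length = w.length →
    |(u.count a : ℤ) - (w.count a : ℤ)| ≤ 1

def EventuallyPeriodic (v : ℕ → α) : Prop :=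
  ∃ p, 0 < p ∧ ∃ N, ∀ n, N ≤ n → v (n + p) = v n

def Recurrent (v : ℕ → α) : Prop :=
  ∀ u : List α, IsFactor v u → ∀ N : ℕ, ∃ i, N ≤ i ∧ OccursAt v u i

/-- `i < j` are consecutive occurrences of the letter `a` in `v`. -/
def ConsecOcc (v : ℕ → α) (a : α) (i j : ℕ) : Prop :=
  i < j ∧ v i = a ∧ v j = a ∧ ∀ k, i < k → k < j → v k ≠ a

/-- `p` is a period of the finite word `z` (i.e. `z` is a prefix of `u^ω` with `|u| = p`). -/
def IsPeriod (z : List α) (p : ℕ) : Prop :=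
  0 < p ∧ ∀ i, i + p < z.length → z[i]? = z[i + p]?

/-- The minimal period of a finite word. -/
noncomputable def minPeriod (z : List α) : ℕ := sInf {p | IsPeriod z p}

/-- The exponent of a finite word: its length divided by its minimal period. -/
noncomputable def expE (z : List α) : ℝ≥0∞ := (z.length : ℝ≥0∞) / (minPeriod z : ℝ≥0∞)

/-- The critical exponent of a sequence: the supremum of exponents of nonempty factors. -/
noncomputable def criticalExponent (v : ℕ → α) : ℝ≥0∞ :=
  ⨆ (z : List α) (_ : IsFactor v z ∧ z ≠ []), expE z

/-- A Pansiot sequence over a `d`-letter alphabet. -/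
def Pansiot (d : ℕ) (v : ℕ → α) : Prop :=
  (∀ i : ℕ, (factorAt v i (d - 1)).Nodup) ∧
  ∀ (a : α) (i j : ℕ), ConsecOcc v a i j → v (i + 1) ≠ v (j + 1)

/-- The letter `a` has frequency `ρ` in the sequence `v`. -/
def HasFreq [DecidableEq α] (v : ℕ → α) (a : α) (ρ : ℝ) : Prop :=
  Tendsto (fun n => ((factorAt v 0 n).count a : ℝ) / n) atTop (nhds ρ)

/-- Factor complexity of a sequence. -/
noncomputable def complexity (v : ℕ → α) (n : ℕ) : ℕ :=
  Set.ncard {u : List α | IsFactor v u ∧ u.length = n}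

/-- Sturmian sequences: aperiodic binary sequences of factor complexity `n + 1`.
Convention: the letter `a` is `false`, the letter `b` is `true`. -/
def Sturmian (u : ℕ → Bool) : Prop :=
  ¬ EventuallyPeriodic u ∧ ∀ n, complexity u n = n + 1

/-- Prepending a letter to a sequence. -/
def consSeq (c : α) (v : ℕ → α) : ℕ → α := fun n =>
  match n with
  | 0 => c
  | Nat.succ m => v m

/-- A standard sequence: a Sturmian sequence `u` such that `a·u` and `b·u` are Sturmian. -/
def IsStandard (u : ℕ → Bool) : Prop :=
  Sturmian u ∧ Sturmian (consSeq false u) ∧ Sturmian (consSeq true u)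

/-- The slope of a binary sequence, with the convention `ρ_b > ρ_a` (`a = false`, `b = true`). -/
def HasSlope (u : ℕ → Bool) (θ : ℝ) : Prop :=
  ∃ ρa ρb : ℝ, HasFreq u false ρa ∧ HasFreq u true ρb ∧ ρa < ρb ∧ θ = ρa / ρb

/-- `θ` has the (infinite) continued fraction expansion `[0; a 1, a 2, a 3, …]`:
there are complete quotients' fractional parts `t n ∈ (0,1)` with `t 0 = θ` and
`1 / t n = a (n+1) + t (n+1)` for all `n`. (The value `a 0` is irrelevant.) -/
def HasCF (θ : ℝ) (a : ℕ → ℕ) : Prop :=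
  ∃ t : ℕ → ℝ, t 0 = θ ∧ ∀ n, 0 < t n ∧ t n < 1 ∧ 1 / t n = (a (n + 1) : ℝ) + t (n + 1)

/-- Number of positions `< n` where `u` takes the value `c`. -/
def countBefore (u : ℕ → Bool) (c : Bool) (n : ℕ) : ℕ :=
  ((List.range n).filter fun i => u i = c).length

/-- The colouring of a binary sequence `u` by `y` (on the `a = false` positions)
and `y'` (on the `b = true` positions). -/
def colour (u : ℕ → Bool) (y : ℕ → α) (y' : ℕ → β) : ℕ → α ⊕ β := fun n =>
  if u n = false then Sum.inl (y (countBefore u false n))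
  else Sum.inr (y' (countBefore u true n))

/-- A constant gap sequence: periodic, and consecutive occurrences of each occurring
letter are at a constant distance. -/
def ConstantGap (y : ℕ → α) : Prop :=
  (∃ p, 0 < p ∧ ∀ n, y (n + p) = y n) ∧
  ∀ c : α, (∃ i, y i = c) → ∃ g, 0 < g ∧ ∀ i j, ConsecOcc y c i j → j - i = g

/-- The discolouration (projection) map: letters of the first alphabet go to `a = false`,
letters of the second alphabet go to `b = true`. -/
def proj : α ⊕ β → Bool := Sum.elim (fun _ => false) (fun _ => true)

/-- `v` is a return word to `w` in the sequence `z`. -/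
def IsReturnWord (z : ℕ → α) (w v : List α) : Prop :=
  ∃ i j : ℕ, i < j ∧ OccursAt z w i ∧ OccursAt z w j ∧
    (∀ k, i < k → k < j → ¬ OccursAt z w k) ∧ v = factorAt z i (j - i)

def RightSpecial (z : ℕ → α) (w : List α) : Prop :=
  ∃ a b : α, a ≠ b ∧ IsFactor z (w ++ [a]) ∧ IsFactor z (w ++ [b])

def LeftSpecial (z : ℕ → α) (w : List α) : Prop :=
  ∃ a b : α, a ≠ b ∧ IsFactor z (a :: w) ∧ IsFactor z (b :: w)

def Bispecial (z : ℕ → α) (w : List α) : Prop := LeftSpecial z w ∧ RightSpecial z w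

/-- `o` enumerates, in increasing order, all occurrences of `w` in `z`. -/
def IsOccEnum (z : ℕ → α) (w : List α) (o : ℕ → ℕ) : Prop :=
  StrictMono o ∧ (∀ n, OccursAt z w (o n)) ∧ ∀ i, OccursAt z w i → ∃ n, o n = i

/-- The derived sequence of `z` with respect to the occurrence enumeration `o` of a factor:
its `n`-th letter is the return word between the `n`-th and `(n+1)`-st occurrences. -/
def derivedSeq (z : ℕ → α) (o : ℕ → ℕ) : ℕ → List α :=
  fun n => factorAt z (o n) (o (n + 1) - o n)

/-- The slope of a sequence over a two-letter alphabet: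
the ratio of the smaller letter frequency to the larger one. -/
def HasSlope2 {γ : Type*} [DecidableEq γ] (z : ℕ → γ) (θ : ℝ) : Prop :=
  ∃ (c c' : γ) (ρ ρ' : ℝ), c ≠ c' ∧ (∀ n, z n = c ∨ z n = c') ∧
    HasFreq z c ρ ∧ HasFreq z c' ρ' ∧ ρ < ρ' ∧ θ = ρ / ρ'

/-- The purely cyclic constant gap sequence `(0 1 ⋯ (δ-1))^ω` over `ZMod δ`. -/
def cyc (δ : ℕ) : ℕ → ZMod δ := fun n => (n : ZMod δ)

/-- The colouring `colour(u, (1 2 ⋯ δ)^ω, (1' 2' ⋯ δ')^ω)` over `2δ` letters. -/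
def colourCyc (δ : ℕ) (u : ℕ → Bool) : ℕ → ZMod δ ⊕ ZMod δ := colour u (cyc δ) (cyc δ)


lemma factorAt_getElem? (v : ℕ → α) (i n j : ℕ) (hj : j < n) :
    (factorAt v i n)[j]? = some (v (i + j)) := by
  simp [factorAt, List.getElem?_map, List.getElem?_range, hj]

theorem statement3 {α : Type*} [Fintype α] (d : ℕ) (hd : 2 ≤ d)
    (hcard : Fintype.card α = d) (v : ℕ → α)
    (hnodup : ∀ i : ℕ, (factorAt v i (d - 1)).Nodup)
    (a b : α) (X : List α) (hab : a ≠ b) (haX : a ∉ X) (hbX : b ∉ X)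
    (hfac : IsFactor v ([a, b] ++ X ++ [a, b])) :
    X.length ≤ d - 2 ∧ ((d : ℝ≥0∞) + 2) / (d : ℝ≥0∞) ≤ criticalExponent v := by
  classical
  obtain ⟨i, hi⟩ := hfac
  set z : List α := [a, b] ++ X ++ [a, b] with hz
  set L := X.length with hL
  have hzlen : z.length = L + 4 := by simp [hz, hL]
  rw [hzlen] at hi
  have hv : ∀ j, j < L + 4 → z[j]? = some (v (i + j)) := by
    intro j hj
    rw [← hi, factorAt_getElem? v i _ j hj]
  -- values of z
  have h0 : z[0]? = some a := by simp [hz]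
  have h1 : z[1]? = some b := by simp [hz]
  have hXk : ∀ k, k < L → z[2 + k]? = X[k]? := by
    intro k hk
    rw [hz]
    rw [List.getElem?_append_left (by simp; omega), List.getElem?_append_right (by simp)]
    congr 1
    simp
  have hLa : z[L + 2]? = some a := by
    rw [hz, List.getElem?_append_right (by simp [hL])]
    have : L + 2 - ([a,b] ++ X).length = 0 := by simp [hL]
    rw [this]; rfl
  have hLb : z[L + 3]? = some b := by
    rw [hz, List.getElem?_append_right (by simp [hL])]
    have : L + 3 - ([a,b] ++ X).length = 1 := by simp [hL]
    rw [this]; rfl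
  -- Claim 1
  have hclaim1 : L ≤ d - 2 := by
    by_contra hcon
    push_neg at hcon
    have hd1 : d - 1 ≤ L := by omega
    have hwnd := hnodup (i + 2)
    set w := factorAt v (i + 2) (d - 1) with hw
    have hwlen : w.length = d - 1 := by simp [hw, factorAt]
    have hmem : ∀ x ∈ w, x ∈ X := by
      intro x hx
      obtain ⟨k, hk, hxk⟩ := List.mem_iff_getElem.mp hx
      rw [hwlen] at hk
      have h1' : w[k]? = some (v ((i + 2) + k)) := by
        rw [hw, factorAt_getElem? v (i+2) _ k (by omega)]
      have h2' : z[2 + k]? = some (v (i + (2 + k))) := hv (2 + k) (by omega)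
      have h3' : X[k]? = some x := by
        rw [← hXk k (by omega), h2', show i + (2 + k) = (i + 2) + k by omega, ← h1']
        simp [List.getElem?_eq_getElem (by omega : k < w.length), hxk]
      exact List.mem_iff_getElem?.mpr ⟨k, h3'⟩
    have hsub : w.toFinset ⊆ Finset.univ \ {a, b} := by
      intro x hx
      simp only [List.mem_toFinset] at hx
      have := hmem x hx
      simp only [Finset.mem_sdiff, Finset.mem_univ, Finset.mem_insert, Finset.mem_singleton,
        true_and]
      push_neg
      exact ⟨fun h => haX (h ▸ this), fun h => hbX (h ▸ this)⟩
    have hcard2 : (Finset.univ \ ({a, b} : Finset α)).card = d - 2 := by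
      rw [Finset.card_sdiff_of_subset (Finset.subset_univ _), Finset.card_univ, hcard,
        Finset.card_insert_of_notMem (by simp [hab]), Finset.card_singleton]
    have := Finset.card_le_card hsub
    rw [List.toFinset_card_of_nodup hwnd, hwlen, hcard2] at this
    omega
  refine ⟨hclaim1, ?_⟩
  -- minimal period of z is L + 2
  have hper : IsPeriod z (L + 2) := by
    refine ⟨by omega, ?_⟩
    intro j hj
    rw [hzlen] at hj
    have : j = 0 ∨ j = 1 := by omega
    rcases this with rfl | rfl
    · rw [h0, show 0 + (L + 2) = L + 2 by omega, hLa]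
    · rw [h1, show 1 + (L + 2) = L + 3 by omega, hLb]
  have hmin : minPeriod z = L + 2 := by
    apply le_antisymm (Nat.sInf_le hper)
    refine le_csInf ⟨L + 2, hper⟩ fun p hmem => ?_
    obtain ⟨hp, hpz⟩ : IsPeriod z p := hmem
    by_contra hlt
    push_neg at hlt
    have h0p := hpz 0 (by rw [hzlen]; omega)
    rw [h0, show 0 + p = p by omega] at h0p
    rcases Nat.lt_or_ge p 2 with h2 | h2
    · have : p = 1 := by omega
      subst this
      rw [h1] at h0p
      exact hab (Option.some_injective _ h0p)
    · have hk : p - 2 < L := by omega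
      have := hXk (p - 2) hk
      rw [show 2 + (p - 2) = p by omega] at this
      rw [this, List.getElem?_eq_getElem (by omega : p - 2 < X.length)] at h0p
      exact haX ((Option.some_injective _ h0p) ▸ List.getElem_mem _)
  have hzne : z ≠ [] := by simp [hz]
  have hexp : expE z = ((L : ℝ≥0∞) + 4) / ((L : ℝ≥0∞) + 2) := by
    rw [expE, hmin, hzlen]
    push_cast
    ring_nf
  have hL2d : (L : ℝ≥0∞) + 2 ≤ (d : ℝ≥0∞) := by
    have : (L + 2 : ℕ) ≤ d := by omega
    exact_mod_cast this
  have hineq : ((d : ℝ≥0∞) + 2) / (d : ℝ≥0∞) ≤ ((L : ℝ≥0∞) + 4) / ((L : ℝ≥0∞) + 2) := by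
    have hd0 : (d : ℝ≥0∞) ≠ 0 := by
      simp only [ne_eq, Nat.cast_eq_zero]; omega
    have hdt : (d : ℝ≥0∞) ≠ ⊤ := ENNReal.natCast_ne_top d
    have hL0 : (L : ℝ≥0∞) + 2 ≠ 0 := by rw [ne_eq, add_eq_zero]; simp
    have hLt : (L : ℝ≥0∞) + 2 ≠ ⊤ := by
      exact ENNReal.add_ne_top.mpr ⟨ENNReal.natCast_ne_top L, by simp⟩
    have e1 : ((d : ℝ≥0∞) + 2) / (d : ℝ≥0∞) = 1 + 2 / (d : ℝ≥0∞) := by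
      rw [ENNReal.add_div, ENNReal.div_self hd0 hdt]
    have e2 : ((L : ℝ≥0∞) + 4) / ((L : ℝ≥0∞) + 2) = 1 + 2 / ((L : ℝ≥0∞) + 2) := by
      rw [show (L : ℝ≥0∞) + 4 = ((L : ℝ≥0∞) + 2) + 2 by ring, ENNReal.add_div,
        ENNReal.div_self hL0 hLt]
    rw [e1, e2]
    gcongr
  have hsup : expE z ≤ criticalExponent v :=
    le_iSup₂ (f := fun z (_ : IsFactor v z ∧ z ≠ []) => expE z) z ⟨⟨i, by rw [hzlen]; exact hi⟩, hzne⟩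
  calc ((d : ℝ≥0∞) + 2) / (d : ℝ≥0∞) ≤ ((L : ℝ≥0∞) + 4) / ((L : ℝ≥0∞) + 2) := hineq
    _ = expE z := hexp.symm
    _ ≤ criticalExponent v := hsup

end BalancedCE
end

section
/- Let d ≥ 11 and let 𝐯 be a recurrent aperiodic balanced sequence over d letters that is a Pansiot sequence. Call a letter of 𝐯 frequent if no two of its consecutive occurrences are at distance d+1, and rare if no two of its consecutive occurrences are at distance d−1. Then either every pair of consecutive occurrences of every frequent letter of 𝐯 is at distance exactly d−1, or every pair of consecutive occurrences of every rare letter of 𝐯 is at distance exactly d+1. -/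
open Filter
open scoped ENNReal

namespace BalancedCE

variable {α : Type*} {β : Type*}

section AuxStatement4
set_option linter.unusedSectionVars false
set_option linter.unusedVariables false

lemma length_factorAt (v : ℕ → α) (i n : ℕ) : (factorAt v i n).length = n := by
  simp [factorAt]
lemma isFactor_factorAt (v : ℕ → α) (i n : ℕ) : IsFactor v (factorAt v i n) :=
  ⟨i, by rw [length_factorAt]⟩
lemma factorAt_eq_iff {v : ℕ → α} {i j n : ℕ} :
    factorAt v i n = factorAt v j n ↔ ∀ k, k < n → v (i + k) = v (j + k) := by
  constructor
  · intro h k hk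
    have := congrArg (fun l => l[k]?) h
    simpa [factorAt, hk] using this
  · intro h
    apply List.ext_getElem (by simp [factorAt])
    intro k hk _
    simp only [factorAt, List.getElem_map, List.getElem_range]
    exact h k (by simpa [factorAt] using hk)
lemma mem_factorAt {v : ℕ → α} {i n : ℕ} {x : α} :
    x ∈ factorAt v i n ↔ ∃ k, k < n ∧ v (i + k) = x := by
  simp [factorAt, List.mem_map]

section Main
set_option linter.unusedSectionVars false
variable [Fintype α] [DecidableEq α] {d : ℕ} {v : ℕ → α}

lemma winj (hpan : Pansiot d v) {i k l : ℕ} (hk : k < d - 1) (hl : l < d - 1)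
    (h : v (i + k) = v (i + l)) : k = l := by
  have hnd := hpan.1 i
  rw [factorAt, List.nodup_map_iff_inj_on List.nodup_range] at hnd
  exact hnd k (List.mem_range.2 hk) l (List.mem_range.2 hl) h

lemma exists_next (hrec : Recurrent v) (s : ℕ) : ∃ o, s < o ∧ v o = v s := by
  obtain ⟨i, hi, hocc⟩ := hrec [v s] ⟨s, by simp [factorAt, List.range_succ]⟩ (s + 1)
  have hvi : v i = v s := by
    simpa [OccursAt, factorAt, List.range_succ] using hocc
  exact ⟨i, by omega, hvi⟩

variable (hv : ∀ s : ℕ, ∃ o, s < o ∧ v o = v s)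

noncomputable def nxt (s : ℕ) : ℕ := Nat.find (hv s)

lemma nxt_gt (s : ℕ) : s < nxt hv s := (Nat.find_spec (hv s)).1

lemma nxt_letter (s : ℕ) : v (nxt hv s) = v s := (Nat.find_spec (hv s)).2

lemma nxt_min {s k : ℕ} (h1 : s < k) (h2 : k < nxt hv s) : v k ≠ v s := fun h =>
  Nat.find_min (hv s) h2 ⟨h1, h⟩

lemma consec_nxt (s : ℕ) : ConsecOcc v (v s) s (nxt hv s) :=
  ⟨nxt_gt hv s, rfl, nxt_letter hv s, fun k h1 h2 => nxt_min hv h1 h2⟩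

lemma nxt_eq_of {s j : ℕ} (h1 : s < j) (h2 : v j = v s)
    (h3 : ∀ k, s < k → k < j → v k ≠ v s) : nxt hv s = j := by
  have hle : nxt hv s ≤ j := Nat.find_le ⟨h1, h2⟩
  rcases lt_or_eq_of_le hle with h | h
  · exact absurd (nxt_letter hv s) (h3 _ (nxt_gt hv s) h)
  · exact h

lemma consec_eq_nxt {a : α} {i j : ℕ} (h : ConsecOcc v a i j) : j = nxt hv i := by
  obtain ⟨hij, hvi, hvj, hbet⟩ := h
  subst hvi
  exact (nxt_eq_of hv hij hvj hbet).symm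

lemma keyM (hd : 11 ≤ d) (hcard : Fintype.card α = d) (hpan : Pansiot d v)
    {k : ℕ} {c : α} (hm : ∀ t, t ≤ d - 2 → v (k + t) ≠ c) :
    v (k + (d - 1)) = v k ∨ v (k + (d - 1)) = c := by
  by_contra h
  push_neg at h
  obtain ⟨h1, h2⟩ := h
  set S : Finset α := (Finset.range (d - 1)).image (fun t => v (k + t)) with hS
  have hScard : S.card = d - 1 := by
    rw [hS, Finset.card_image_of_injOn, Finset.card_range]
    intro x hx y hy hxy
    exact winj hpan (List.mem_range.1 (by simpa using hx)) (List.mem_range.1 (by simpa using hy)) hxy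
  have hcS : c ∉ S := by
    rw [hS]
    simp only [Finset.mem_image, Finset.mem_range]
    rintro ⟨t, ht, hvt⟩
    exact hm t (by omega) hvt
  have hxS : v (k + (d - 1)) ∉ S := by
    rw [hS]
    simp only [Finset.mem_image, Finset.mem_range]
    rintro ⟨t, ht, heq⟩
    rcases Nat.eq_zero_or_pos t with rfl | htpos
    · exact h1 (by simpa using heq.symm)
    · have : t - 1 = d - 2 := by
        apply winj hpan (i := k + 1) (show t - 1 < d - 1 by omega) (show d - 2 < d - 1 by omega)
        rw [show k + 1 + (t - 1) = k + t by omega, show k + 1 + (d - 2) = k + (d - 1) by omega]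
        exact heq
      omega
  have hbig : (insert (v (k + (d - 1))) (insert c S)).card = d + 1 := by
    rw [Finset.card_insert_of_notMem (by simp [h2, hxS]),
        Finset.card_insert_of_notMem hcS, hScard]
    omega
  have := Finset.card_le_univ (insert (v (k + (d - 1))) (insert c S))
  rw [hbig, hcard] at this
  omega

lemma gap_lb (hd : 11 ≤ d) (hpan : Pansiot d v) (s : ℕ) : s + (d - 1) ≤ nxt hv s := by
  by_contra hlt
  push_neg at hlt
  have h0 : (0 : ℕ) = nxt hv s - s := by
    apply winj hpan (i := s) (show 0 < d - 1 by omega) (show nxt hv s - s < d - 1 by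
      have := nxt_gt hv s; omega)
    rw [show s + (nxt hv s - s) = nxt hv s by have := nxt_gt hv s; omega]
    exact (nxt_letter hv s).symm
  have := nxt_gt hv s
  omega

lemma gap_ub (hd : 11 ≤ d) (hcard : Fintype.card α = d) (hpan : Pansiot d v) (s : ℕ) :
    nxt hv s ≤ s + d + 1 := by
  by_contra hlt
  push_neg at hlt
  have hfree : ∀ t, s < t → t < s + d + 2 → v t ≠ v s := fun t ht1 ht2 =>
    nxt_min hv ht1 (by omega)
  have e1 : v (s + d) = v (s + 1) := by
    rcases keyM hd hcard hpan (k := s + 1) (c := v s)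
        (fun t ht => hfree (s + 1 + t) (by omega) (by omega)) with h | h
    · rwa [show s + 1 + (d - 1) = s + d by omega] at h
    · rw [show s + 1 + (d - 1) = s + d by omega] at h
      exact absurd h (hfree (s + d) (by omega) (by omega))
  have e2 : v (s + d + 1) = v (s + 2) := by
    rcases keyM hd hcard hpan (k := s + 2) (c := v s)
        (fun t ht => hfree (s + 2 + t) (by omega) (by omega)) with h | h
    · rwa [show s + 2 + (d - 1) = s + d + 1 by omega] at h
    · rw [show s + 2 + (d - 1) = s + d + 1 by omega] at h
      exact absurd h (hfree (s + d + 1) (by omega) (by omega))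
  have hcons : ConsecOcc v (v (s + 1)) (s + 1) (s + d) := by
    refine ⟨by omega, rfl, e1, fun k hk1 hk2 hk3 => ?_⟩
    have : k - (s + 1) = 0 := by
      apply winj hpan (i := s + 1) (show k - (s + 1) < d - 1 by omega) (show 0 < d - 1 by omega)
      rw [show s + 1 + (k - (s + 1)) = k by omega]
      simpa using hk3
    omega
  have := hpan.2 _ _ _ hcons
  rw [show s + 1 + 1 = s + 2 by omega, show s + d + 1 = s + d + 1 from rfl] at this
  exact this e2.symm

lemma factorAt_singleton (x : ℕ) : factorAt v x 1 = [v x] := by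
  simp [factorAt, List.range_succ]

lemma factorAt_append (i m n : ℕ) : factorAt v i (m + n) = factorAt v i m ++ factorAt v (i + m) n := by
  simp only [factorAt]
  rw [List.range_add, List.map_append, List.map_map]
  congr 1
  ext k
  simp [Nat.add_assoc]

lemma spread (hd : 11 ≤ d) (hbal : Balanced v) {a : α} {i j i' j' : ℕ}
    (h : ConsecOcc v a i j) (h' : ConsecOcc v a i' j') (hgap : j - i + 2 ≤ j' - i') : False := by
  set g := j - i with hg
  have hij := h.1
  have hij' := h'.1
  have hg1 : 1 ≤ g := by omega
  set u := factorAt v i (g + 1) with hu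
  set w := factorAt v (i' + 1) (g + 1) with hw
  have hu2 : 2 ≤ u.count a := by
    have e1 : u = factorAt v i 1 ++ factorAt v (i + 1) (g - 1) ++ factorAt v (i + g) 1 := by
      rw [hu, show g + 1 = 1 + (g - 1) + 1 by omega, factorAt_append, factorAt_append]
      rw [show i + (1 + (g - 1)) = i + g by omega]
    rw [e1, factorAt_singleton, factorAt_singleton]
    have hvj : v (i + g) = a := by rw [show i + g = j by omega]; exact h.2.2.1
    simp [List.count_append, h.2.1, hvj]
  have hw0 : w.count a = 0 := by
    rw [List.count_eq_zero]
    intro hx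
    obtain ⟨k, hk, hkx⟩ := mem_factorAt.1 hx
    exact h'.2.2.2 (i' + 1 + k) (by omega) (by omega) hkx
  have hlen : u.length = w.length := by rw [hu, hw, length_factorAt, length_factorAt]
  have := hbal a u w ⟨i, by rw [hu, length_factorAt]⟩ ⟨i' + 1, by rw [hw, length_factorAt]⟩ hlen
  rw [hw0] at this
  obtain ⟨h1', h2'⟩ := abs_le.1 this
  omega

def LF (v : ℕ → α) (d : ℕ) (a : α) : Prop := ∀ i j, ConsecOcc v a i j → j - i ≠ d + 1
def HF (v : ℕ → α) (d : ℕ) (a : α) : Prop := ∀ i j, ConsecOcc v a i j → j - i ≠ d - 1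

lemma LF_of_gap (hd : 11 ≤ d) (hbal : Balanced v) {a : α} {i j : ℕ}
    (h : ConsecOcc v a i j) (hg : j = i + (d - 1)) : LF v d a := fun i' j' h' heq =>
  spread hd hbal h h' (by have := h.1; have := h'.1; omega)

lemma HF_of_gap (hd : 11 ≤ d) (hbal : Balanced v) {a : α} {i j : ℕ}
    (h : ConsecOcc v a i j) (hg : j = i + d + 1) : HF v d a := fun i' j' h' heq =>
  spread hd hbal h' h (by have := h.1; have := h'.1; omega)

lemma no_close (hd : 11 ≤ d) (hpan : Pansiot d v) {s t : ℕ} (h1 : 0 < t) (h2 : t < d - 1) :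
    v (s + t) ≠ v s := by
  intro h
  have := winj hpan (i := s) h2 (show 0 < d - 1 by omega) (by simpa using h)
  omega

lemma gap_cases (hd : 11 ≤ d) (hcard : Fintype.card α = d) (hpan : Pansiot d v) (s : ℕ) :
    nxt hv s = s + (d - 1) ∨ nxt hv s = s + d ∨ nxt hv s = s + d + 1 := by
  have h1 := gap_lb hv hd hpan s
  have h2 := gap_ub hv hd hcard hpan s
  omega

lemma after_P1 (hd : 11 ≤ d) (hcard : Fintype.card α = d) (hpan : Pansiot d v)
    {s : ℕ} (h : nxt hv s = s + d + 1) : nxt hv (s + 1) = s + d := by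
  have hfree : ∀ t, s < t → t < s + d + 1 → v t ≠ v s := fun t ht1 ht2 =>
    nxt_min hv ht1 (by omega)
  have e1 : v (s + d) = v (s + 1) := by
    rcases keyM hd hcard hpan (k := s + 1) (c := v s)
        (fun t ht => hfree (s + 1 + t) (by omega) (by omega)) with h' | h'
    · rwa [show s + 1 + (d - 1) = s + d by omega] at h'
    · rw [show s + 1 + (d - 1) = s + d by omega] at h'
      exact absurd h' (hfree (s + d) (by omega) (by omega))
  apply nxt_eq_of hv (by omega) e1
  intro k hk1 hk2
  rw [show k = s + 1 + (k - s - 1) by omega]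
  exact no_close hd hpan (by omega) (by omega)

lemma after_S (hd : 11 ≤ d) (hcard : Fintype.card α = d) (hpan : Pansiot d v)
    {s : ℕ} (h : nxt hv s = s + d) : nxt hv (s + 1) = s + 1 + d + 1 := by
  rcases gap_cases hv hd hcard hpan (s + 1) with h' | h' | h'
  · exfalso
    have e1 : v (s + 1 + (d - 1)) = v (s + 1) := by rw [← h']; exact nxt_letter hv (s + 1)
    have e2 : v (s + d) = v s := by rw [← h]; exact nxt_letter hv s
    rw [show s + 1 + (d - 1) = s + d by omega, e2] at e1
    exact nxt_min hv (show s < s + 1 by omega) (by omega) e1.symm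
  · exfalso
    have hcons := consec_nxt hv s
    rw [h] at hcons
    have hne := hpan.2 _ _ _ hcons
    have e1 : v (s + 1 + d) = v (s + 1) := by rw [← h']; exact nxt_letter hv (s + 1)
    rw [show s + d + 1 = s + 1 + d by omega] at hne
    exact hne e1.symm
  · exact h'

lemma after_P2 (hd : 11 ≤ d) (hpan : Pansiot d v)
    {s : ℕ} (h : nxt hv s = s + (d - 1)) : nxt hv (s + 1) ≠ s + 1 + (d - 1) := by
  intro h'
  have hcons := consec_nxt hv s
  rw [h] at hcons
  have hne := hpan.2 _ _ _ hcons
  have e1 : v (s + 1 + (d - 1)) = v (s + 1) := by rw [← h']; exact nxt_letter hv (s + 1)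
  rw [show s + (d - 1) + 1 = s + 1 + (d - 1) by omega] at hne
  exact hne e1.symm

lemma before_S (hd : 11 ≤ d) (hcard : Fintype.card α = d) (hpan : Pansiot d v)
    {s : ℕ} (h : nxt hv (s + 1) = s + 1 + d) : nxt hv s = s + (d - 1) := by
  rcases gap_cases hv hd hcard hpan s with h' | h' | h'
  · exact h'
  · have := after_S hv hd hcard hpan h'
    omega
  · have := after_P1 hv hd hcard hpan h'
    omega

lemma const_d (hd : 11 ≤ d) (hcard : Fintype.card α = d) (hpan : Pansiot d v) (hbal : Balanced v)
    {s : ℕ} (hS : nxt hv s = s + d) (hL : LF v d (v s)) (hH : HF v d (v s)) : False := by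
  have e0 : v (s + d) = v s := by rw [← hS]; exact nxt_letter hv s
  have hSd : nxt hv (s + d) = s + d + d := by
    rcases gap_cases hv hd hcard hpan (s + d) with h | h | h
    · exfalso
      have hcons := consec_nxt hv (s + d)
      rw [h, e0] at hcons
      exact hH _ _ hcons (by omega)
    · exact h
    · exfalso
      have hcons := consec_nxt hv (s + d)
      rw [h, e0] at hcons
      exact hL _ _ hcons (by omega)
  have h1 : nxt hv (s + 1) = s + 1 + d + 1 := after_S hv hd hcard hpan hS
  have hcons1 := consec_nxt hv (s + 1)
  rw [h1] at hcons1
  have hHw : HF v d (v (s + 1)) := HF_of_gap hd hbal hcons1 (by omega)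
  have h2 : nxt hv (s + d + 1) = s + d + 1 + d + 1 := by
    have := after_S hv hd hcard hpan hSd
    rwa [show s + d + 1 = s + d + 1 from rfl] at this
  have h3 : nxt hv (s + d + 1 + 1) = s + d + 1 + d := after_P1 hv hd hcard hpan h2
  have e2 : v (s + d + 1 + 1) = v (s + 1) := by
    rw [show s + d + 1 + 1 = s + 1 + d + 1 by omega, ← h1]
    exact nxt_letter hv (s + 1)
  have hcons2 := consec_nxt hv (s + d + 1 + 1)
  rw [h3, e2] at hcons2
  exact hHw _ _ hcons2 (by omega)

lemma Lstep (hd : 11 ≤ d) (hcard : Fintype.card α = d) (hpan : Pansiot d v) (hbal : Balanced v)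
    {s : ℕ} (hS : nxt hv s = s + d) (hL : LF v d (v s)) :
    ∃ s', (s' = s + d ∨ s' = s + d + 1) ∧ nxt hv s' = s' + d ∧ LF v d (v s') := by
  have e0 : v (s + d) = v s := by rw [← hS]; exact nxt_letter hv s
  rcases gap_cases hv hd hcard hpan (s + d) with h | h | h
  · -- gap d-1 at s+d : target s+d+1
    have h1 : nxt hv (s + 1) = s + 1 + d + 1 := after_S hv hd hcard hpan hS
    have h2 : nxt hv (s + 1 + 1) = s + 1 + d := after_P1 hv hd hcard hpan h1
    have e2 : v (s + d + 1) = v (s + 1 + 1) := by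
      rw [show s + d + 1 = s + 1 + d by omega, ← h2]
      exact nxt_letter hv (s + 1 + 1)
    have hcons2 := consec_nxt hv (s + 1 + 1)
    rw [h2] at hcons2
    have hL2 : LF v d (v (s + 1 + 1)) := LF_of_gap hd hbal hcons2 (by omega)
    have h3 : nxt hv (s + d + 1) = s + d + 1 + d := by
      rcases gap_cases hv hd hcard hpan (s + d + 1) with h' | h' | h'
      · exfalso
        exact after_P2 hv hd hpan h h' 
      · exact h'
      · exfalso
        have hcons3 := consec_nxt hv (s + d + 1)
        rw [h', e2] at hcons3
        exact hL2 _ _ hcons3 (by omega)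
    exact ⟨s + d + 1, Or.inr rfl, h3, by rw [e2]; exact hL2⟩
  · exact ⟨s + d, Or.inl rfl, h, by rw [e0]; exact hL⟩
  · exfalso
    have hcons := consec_nxt hv (s + d)
    rw [h, e0] at hcons
    exact hL _ _ hcons (by omega)

lemma Hstep (hd : 11 ≤ d) (hcard : Fintype.card α = d) (hpan : Pansiot d v) (hbal : Balanced v)
    {t : ℕ} (hS : nxt hv (t + 2) = t + 2 + d) (hH : HF v d (v (t + 2))) :
    nxt hv (t + d + 1) = t + d + 1 + d ∧ HF v d (v (t + d + 1)) := by
  have hb1 : nxt hv (t + 1) = t + 1 + (d - 1) := by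
    apply before_S hv hd hcard hpan
    rw [show t + 1 + 1 = t + 2 by omega, hS]
  have hb0 : nxt hv t = t + d + 1 := by
    rcases gap_cases hv hd hcard hpan t with h | h | h
    · exact absurd hb1 (after_P2 hv hd hpan h)
    · have := after_S hv hd hcard hpan h
      omega
    · exact h
  have e0 : v (t + d + 1) = v t := by rw [← hb0]; exact nxt_letter hv t
  have hconst := consec_nxt hv t
  rw [hb0] at hconst
  have hHt : HF v d (v t) := HF_of_gap hd hbal hconst (by omega)
  have e3 : v (t + 2 + d) = v (t + 2) := by rw [← hS]; exact nxt_letter hv (t + 2)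
  refine ⟨?_, by rw [e0]; exact hHt⟩
  rcases gap_cases hv hd hcard hpan (t + d + 1) with h' | h' | h'
  · exfalso
    have hcons := consec_nxt hv (t + d + 1)
    rw [h', e0] at hcons
    exact hHt _ _ hcons (by omega)
  · exact h'
  · exfalso
    have h4 : nxt hv (t + d + 1 + 1) = t + d + 1 + d := after_P1 hv hd hcard hpan h'
    have e4 : v (t + d + 1 + 1) = v (t + 2) := by
      rw [show t + d + 1 + 1 = t + 2 + d by omega]
      exact e3
    have hcons4 := consec_nxt hv (t + d + 1 + 1)
    rw [h4, e4] at hcons4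
    exact hH _ _ hcons4 (by omega)

lemma Hchain (hd : 11 ≤ d) (hcard : Fintype.card α = d) (hpan : Pansiot d v) (hbal : Balanced v)
    {t₀ : ℕ} (h2 : 2 ≤ t₀) (hS : nxt hv t₀ = t₀ + d) (hH : HF v d (v t₀)) :
    ∀ j : ℕ, nxt hv (t₀ + j * (d - 1)) = t₀ + j * (d - 1) + d ∧ HF v d (v (t₀ + j * (d - 1))) := by
  intro j
  induction j with
  | zero => simpa using ⟨hS, hH⟩
  | succ j ih =>
    obtain ⟨ih1, ih2⟩ := ih
    set p := t₀ + j * (d - 1) with hp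
    have hpe : p = (p - 2) + 2 := by omega
    have hmul : (j + 1) * (d - 1) = j * (d - 1) + (d - 1) := by ring
    have hS' : nxt hv ((p - 2) + 2) = (p - 2) + 2 + d := by rw [← hpe]; exact ih1
    have hH' : HF v d (v ((p - 2) + 2)) := by rw [← hpe]; exact ih2
    obtain ⟨r1, r2⟩ := Hstep hv hd hcard hpan hbal hS' hH'
    have hidx : (p - 2) + d + 1 = t₀ + (j + 1) * (d - 1) := by omega
    rw [hidx] at r1 r2
    exact ⟨r1, r2⟩

lemma Lgrow (hd : 11 ≤ d) (hcard : Fintype.card α = d) (hpan : Pansiot d v) (hbal : Balanced v)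
    {s : ℕ} (hS : nxt hv s = s + d) (hL : LF v d (v s)) :
    ∀ m : ℕ, ∃ s', m ≤ s' ∧ nxt hv s' = s' + d ∧ LF v d (v s') := by
  intro m
  induction m with
  | zero => exact ⟨s, Nat.zero_le _, hS, hL⟩
  | succ m ih =>
    obtain ⟨s', hm, h1, h2⟩ := ih
    rcases Nat.lt_or_ge s' (m + 1) with hlt | hge
    · obtain ⟨s'', hor, h1', h2'⟩ := Lstep hv hd hcard hpan hbal h1 h2
      exact ⟨s'', by omega, h1', h2'⟩
    · exact ⟨s', hge, h1, h2⟩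

lemma collide (hd : 11 ≤ d) (hcard : Fintype.card α = d) (hpan : Pansiot d v) (hbal : Balanced v)
    {t₀ : ℕ}
    (HB : ∀ j : ℕ, nxt hv (t₀ + j * (d - 1)) = t₀ + j * (d - 1) + d ∧ HF v d (v (t₀ + j * (d - 1)))) :
    ∀ n : ℕ, ∀ s : ℕ, t₀ ≤ s → nxt hv s = s + d → LF v d (v s) →
      d - 2 - (s - t₀) % (d - 1) < n → False := by
  intro n
  induction n with
  | zero => intro s _ _ _ hm; omega
  | succ n ih =>
    intro s hts hS hL hm
    set r := (s - t₀) % (d - 1) with hr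
    set q := (s - t₀) / (d - 1) with hq
    have hdm : (d - 1) * q + r = s - t₀ := Nat.div_add_mod (s - t₀) (d - 1)
    have hrlt : r < d - 1 := Nat.mod_lt _ (by omega)
    have hcomm : (d - 1) * q = q * (d - 1) := Nat.mul_comm _ _
    rcases Nat.eq_zero_or_pos r with hr0 | hrpos
    · -- s is an H-single too
      have hc : t₀ + q * (d - 1) = s := by omega
      obtain ⟨hb1, hb2⟩ := HB q
      rw [hc] at hb2
      exact const_d hv hd hcard hpan hbal hS hL hb2
    rcases Nat.eq_or_lt_of_le (show 1 ≤ r by omega) with hr1 | hrgt1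
    · -- s = t_q + 1
      obtain ⟨hb1, _⟩ := HB q
      have hc : t₀ + q * (d - 1) + 1 = s := by omega
      have := after_S hv hd hcard hpan hb1
      rw [hc] at this
      omega
    rcases Nat.eq_or_lt_of_le (show r ≤ d - 2 by omega) with hrtop | hrmid
    · -- s + 1 = t_{q+1}
      obtain ⟨hb1, _⟩ := HB (q + 1)
      have hmul : (q + 1) * (d - 1) = q * (d - 1) + (d - 1) := by ring
      have hc : t₀ + (q + 1) * (d - 1) = s + 1 := by omega
      rw [hc] at hb1
      have := after_S hv hd hcard hpan hS
      omega
    · -- 2 ≤ r ≤ d - 3 : step the L-single forward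
      obtain ⟨s', hor, hS', hL'⟩ := Lstep hv hd hcard hpan hbal hS hL
      have hmul : (d - 1) * (q + 1) = (d - 1) * q + (d - 1) := by ring
      rcases hor with h' | h'
      · have hrew : s' - t₀ = (d - 1) * (q + 1) + (r + 1) := by omega
        have hr' : (s' - t₀) % (d - 1) = r + 1 := by
          rw [hrew, Nat.mul_add_mod, Nat.mod_eq_of_lt (by omega)]
        exact ih s' (by omega) hS' hL' (by omega)
      · rcases Nat.eq_or_lt_of_le (show r ≤ d - 3 by omega) with hre | hre
        · -- r = d - 3 : s' lands exactly on the H-chain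
          have hmul2 : (q + 2) * (d - 1) = (d - 1) * q + (d - 1) + (d - 1) := by ring
          obtain ⟨_, hb2⟩ := HB (q + 2)
          have hc : t₀ + (q + 2) * (d - 1) = s' := by omega
          rw [hc] at hb2
          exact const_d hv hd hcard hpan hbal hS' hL' hb2
        · have hrew : s' - t₀ = (d - 1) * (q + 1) + (r + 2) := by omega
          have hr' : (s' - t₀) % (d - 1) = r + 2 := by
            rw [hrew, Nat.mul_add_mod, Nat.mod_eq_of_lt (by omega)]
          exact ih s' (by omega) hS' hL' (by omega)


end Main
end AuxStatement4

theorem statement4 {α : Type*} [Fintype α] [DecidableEq α] (d : ℕ) (hd : 11 ≤ d)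
    (hcard : Fintype.card α = d) (v : ℕ → α)
    (hrec : Recurrent v) (hap : ¬ EventuallyPeriodic v) (hbal : Balanced v)
    (hpan : Pansiot d v) :
    (∀ a : α, (∃ i, v i = a) →
      (∀ i j : ℕ, ConsecOcc v a i j → j - i ≠ d + 1) →
      ∀ i j : ℕ, ConsecOcc v a i j → j - i = d - 1) ∨
    (∀ a : α, (∃ i, v i = a) →
      (∀ i j : ℕ, ConsecOcc v a i j → j - i ≠ d - 1) →
      ∀ i j : ℕ, ConsecOcc v a i j → j - i = d + 1) := by
  by_contra hcon
  push_neg at hcon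
  obtain ⟨hP, hQ⟩ := hcon
  obtain ⟨a, ha, hfreq, i, j, hcons, hne⟩ := hP
  obtain ⟨b, hb, hrare, i', j', hcons', hne'⟩ := hQ
  have hv : ∀ s : ℕ, ∃ o, s < o ∧ v o = v s := exists_next hrec
  -- the frequent letter gives an L-single
  have hj : j = nxt hv i := consec_eq_nxt hv hcons
  have hlb := gap_lb hv hd hpan i
  have hub := gap_ub hv hd hcard hpan i
  have hfr := hfreq i j hcons
  have hSL : nxt hv i = i + d := by omega
  have hLv : LF v d (v i) := by rw [hcons.2.1]; exact hfreq
  -- the rare letter gives an H-single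
  have hj' : j' = nxt hv i' := consec_eq_nxt hv hcons'
  have hlb' := gap_lb hv hd hpan i'
  have hub' := gap_ub hv hd hcard hpan i'
  have hra := hrare i' j' hcons'
  have hgap' : j' = i' + d := by omega
  -- transfer the H-single to a position ≥ 2 using recurrence
  obtain ⟨i'', hge2, hocc⟩ := hrec (factorAt v i' (d + 1)) (isFactor_factorAt v i' (d + 1)) 2
  simp only [OccursAt, length_factorAt] at hocc
  have hpt := factorAt_eq_iff.1 hocc
  have hb0 : v i'' = b := by
    have e := hpt 0 (by omega)
    simp only [Nat.add_zero] at e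
    rw [e]; exact hcons'.2.1
  have hbd : v (i'' + d) = b := by
    have e := hpt d (by omega)
    rw [e, show i' + d = j' by omega]; exact hcons'.2.2.1
  have hconsb : ConsecOcc v b i'' (i'' + d) := by
    refine ⟨by omega, hb0, hbd, fun k hk1 hk2 => ?_⟩
    have e := hpt (k - i'') (by omega)
    rw [show i'' + (k - i'') = k by omega] at e
    rw [e]
    exact hcons'.2.2.2 (i' + (k - i'')) (by omega) (by omega)
  have hS'' : nxt hv i'' = i'' + d := (consec_eq_nxt hv hconsb).symm
  have hHb : HF v d (v i'') := by rw [hb0]; exact hrare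
  have HB := Hchain hv hd hcard hpan hbal hge2 hS'' hHb
  obtain ⟨s, hms, hSs, hLs⟩ := Lgrow hv hd hcard hpan hbal hSL hLv i''
  exact collide hv hd hcard hpan hbal HB (d + 1) s hms hSs hLs (by omega)


end BalancedCE
end
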